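/- For all x ∈ [0,1], sup over y ∈ (0, 1/2) of |(1 - xy)^{1/y} - 1 + x| ≤ x²/2. -/
import Mathlib

/-- For all `x ∈ [0,1]` and `y ∈ (0, 1/2)`, `|(1 - xy)^{1/y} - 1 + x| ≤ x²/2`. -/
theorem stmt13 (x : ℝ) (hx : x ∈ Set.Icc (0 : ℝ) 1) (y : ℝ) (hy : y ∈ Set.Ioo (0 : ℝ) (1 / 2)) :
    |(1 - x * y) ^ (1 / y) - 1 + x| ≤ x ^ 2 / 2 := by
  obtain ⟨hx0, hx1⟩ := hx
  obtain ⟨hy0, hy2⟩ := hy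
  have hxy : x * y < 1 / 2 := by nlinarith
  have ha : (0:ℝ) < 1 - x * y := by linarith
  -- lower bound: 1 - x ≤ (1 - x y)^(1/y)
  have hbern : (1 - x) ^ y ≤ 1 - x * y := by
    have := rpow_one_add_le_one_add_mul_self (s := -x) (by linarith) hy0.le (by linarith)
    calc (1 - x) ^ y = (1 + (-x)) ^ y := by ring_nf
    _ ≤ 1 + y * (-x) := this
    _ = 1 - x * y := by ring
  have hlow : 1 - x ≤ (1 - x * y) ^ (1 / y) := by
    have h1 : ((1 - x) ^ y) ^ (1 / y) ≤ (1 - x * y) ^ (1 / y) :=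
      Real.rpow_le_rpow (Real.rpow_nonneg (by linarith) y) hbern (by positivity)
    rwa [← Real.rpow_mul (by linarith : (0:ℝ) ≤ 1 - x), mul_one_div, div_self hy0.ne',
      Real.rpow_one] at h1
  -- upper bound
  have hexp : (1 - x * y) ^ (1 / y) ≤ Real.exp (-x) := by
    have h1 : 1 - x * y ≤ Real.exp (-(x * y)) := by
      have := Real.add_one_le_exp (-(x * y)); linarith
    calc (1 - x * y) ^ (1 / y) ≤ (Real.exp (-(x * y))) ^ (1 / y) :=
          Real.rpow_le_rpow ha.le h1 (by positivity)
    _ = Real.exp (-x) := by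
          rw [← Real.exp_mul]; congr 1; field_simp
  have hq : Real.exp (-x) ≤ 1 - x + x ^ 2 / 2 := by
    have h1 := Real.quadratic_le_exp_of_nonneg hx0
    have h2 : Real.exp (-x) * Real.exp x = 1 := by
      rw [← Real.exp_add]; simp
    have h3 : 0 < Real.exp (-x) := Real.exp_pos _
    nlinarith [sq_nonneg x, sq_nonneg (x^2)]
  rw [abs_le]
  constructor <;> nlinarith
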